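/- The infinite lower-triangular matrices F and G with entries F_{k,m}(a) = (1 - a q^{2m}) (q^{-k}; q)_m q^{k m} / (a q^{k+1}; q)_m and G_{k,m}(a) = (q^{-k}; q)_m (a q^m; q)_k q^m / ((1 - a q^m) (q; q)_m (q; q)_k) are inverse to each other; that is, for all nonnegative integers N and j with j ≤ N, the sum over k from j to N of F_{N,k}(a) · G_{k,j}(a) equals 1 if j = N and 0 otherwise. -/

import Mathlib

open Finset

/-- The finite q-shifted factorial `(a; q)_n`. -/
noncomputable def qp (q a : ℂ) (n : ℕ) : ℂ := ∏ i ∈ Finset.range n, (1 - a * q ^ i)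

lemma qp_succ (q a : ℂ) (n : ℕ) : qp q a (n+1) = qp q a n * (1 - a * q ^ n) :=
  Finset.prod_range_succ _ n

lemma qp_inv_shift (q : ℂ) (hq0 : q ≠ 0) (k j : ℕ) :
    qp q ((q^(k+1))⁻¹) j * (1 - (q^(k+1))⁻¹ * q^j)
      = (1 - (q^(k+1))⁻¹) * qp q ((q^k)⁻¹) j := by
  have h1 : qp q ((q^(k+1))⁻¹) j * (1 - (q^(k+1))⁻¹ * q^j)
      = qp q ((q^(k+1))⁻¹) (j+1) := (qp_succ _ _ _).symm
  rw [h1]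
  unfold qp
  rw [Finset.prod_range_succ']
  have : ∀ i ∈ Finset.range j,
      (1 - (q^(k+1))⁻¹ * q^(i+1)) = (1 - (q^k)⁻¹ * q^i) := by
    intro i _
    congr 1
    field_simp
    ring
  rw [Finset.prod_congr rfl this, pow_zero, mul_one, mul_comm]

noncomputable def TT (q a : ℂ) (N j k : ℕ) : ℂ :=
  (q^k - q^j) * (a*q^(N+k) - 1) / (q^N - q^j)
    * (qp q ((q^N)⁻¹) k * q^(N*k) / qp q (a*q^(N+1)) k)
    * (qp q ((q^k)⁻¹) j * qp q (a*q^j) k * q^j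
        / ((1 - a*q^j) * qp q q j * qp q q k))

section
variable (q a : ℂ) (hq0 : q ≠ 0)
    (hden1 : ∀ m : ℕ, a * q ^ m ≠ 1) (hden2 : ∀ i : ℕ, q ^ (i + 1) ≠ 1)

include hden1 in
lemma one_sub_aq_ne (m : ℕ) : (1:ℂ) - a * q^m ≠ 0 :=
  sub_ne_zero.mpr (Ne.symm (hden1 m))

include hden2 in
lemma one_sub_q_ne (i : ℕ) : (1:ℂ) - q^(i+1) ≠ 0 :=
  sub_ne_zero.mpr (Ne.symm (hden2 i))

include hden2 in
lemma qp_q_ne (n : ℕ) : qp q q n ≠ 0 := by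
  unfold qp
  rw [Finset.prod_ne_zero_iff]
  intro i _
  have : q * q^i = q^(i+1) := by ring
  rw [this]
  exact one_sub_q_ne q hden2 i

include hden1 in
lemma qp_aq_ne (m n : ℕ) : qp q (a*q^m) n ≠ 0 := by
  unfold qp
  rw [Finset.prod_ne_zero_iff]
  intro i _
  have : a * q^m * q^i = a * q^(m+i) := by rw [pow_add]; ring
  rw [this]
  exact one_sub_aq_ne q a hden1 (m+i)

include hq0 hden2 in
lemma pow_sub_pow_ne {j m : ℕ} (h : j < m) : (q:ℂ)^m - q^j ≠ 0 := by
  obtain ⟨d, hd⟩ : ∃ d, m = j + (d+1) := ⟨m - j - 1, by omega⟩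
  rw [hd, pow_add]
  intro hc
  apply one_sub_q_ne q hden2 d
  have hqj : (q:ℂ)^j ≠ 0 := pow_ne_zero _ hq0
  have : (q:ℂ)^j * (q^(d+1) - 1) = 0 := by linear_combination hc
  rcases mul_eq_zero.mp this with h' | h'
  · exact absurd h' hqj
  · linear_combination -h'

include hq0 hden1 hden2 in
set_option maxHeartbeats 1000000 in
lemma step {N j k : ℕ} (hjk : j ≤ k) (hjN : j < N) :
    ((1 - a * q ^ (2 * k)) * qp q ((q ^ N)⁻¹) k * q ^ (N * k)
        / qp q (a * q ^ (N + 1)) k) *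
      (qp q ((q ^ k)⁻¹) j * qp q (a * q ^ j) k * q ^ j
        / ((1 - a * q ^ j) * qp q q j * qp q q k))
    = TT q a N j (k+1) - TT q a N j k := by
  have hqk1 : (q:ℂ)^(k+1) ≠ 0 := pow_ne_zero _ hq0
  have hne3 : (1:ℂ) - (q^(k+1))⁻¹ * q^j ≠ 0 := by
    have h : (1:ℂ) - (q^(k+1))⁻¹ * q^j = (q^(k+1) - q^j) / q^(k+1) := by
      field_simp
    rw [h]
    exact div_ne_zero (pow_sub_pow_ne q hq0 hden2 (Nat.lt_succ_of_le hjk)) hqk1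
  have e3 : qp q ((q^(k+1))⁻¹) j
      = (1 - (q^(k+1))⁻¹) * qp q ((q^k)⁻¹) j / (1 - (q^(k+1))⁻¹ * q^j) := by
    rw [eq_div_iff hne3]
    exact qp_inv_shift q hq0 k j
  have h2 : qp q (a*q^(N+1)) k ≠ 0 := qp_aq_ne q a hden1 (N+1) k
  have h2' : (1:ℂ) - a*q^(N+1)*q^k ≠ 0 := by
    have : a*q^(N+1)*q^k = a*q^(N+1+k) := by rw [pow_add]; ring
    rw [this]; exact one_sub_aq_ne q a hden1 (N+1+k)
  have h5 : qp q q k ≠ 0 := qp_q_ne q hden2 k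
  have h5' : (1:ℂ) - q*q^k ≠ 0 := by
    have : q*q^k = q^(k+1) := by ring
    rw [this]; exact one_sub_q_ne q hden2 k
  have hCj : qp q q j ≠ 0 := qp_q_ne q hden2 j
  have haj : (1:ℂ) - a*q^j ≠ 0 := one_sub_aq_ne q a hden1 j
  have huv : (q:ℂ)^N - q^j ≠ 0 := pow_sub_pow_ne q hq0 hden2 hjN
  have huv2 : (q:ℂ)^(k+1) - q^j ≠ 0 := pow_sub_pow_ne q hq0 hden2 (Nat.lt_succ_of_le hjk)
  have hqN : (q:ℂ)^N ≠ 0 := pow_ne_zero _ hq0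
  have key : (1 - a*q^(2*k)) * ((q^N - q^j) * (1 - a*q^(N+1)*q^k) * (1 - q*q^k))
      = (a*q^(N+(k+1)) - 1) * (q^N - q^k) * (q^(k+1) - 1) * (1 - a*q^j*q^k)
        - (q^k - q^j) * (a*q^(N+k) - 1) * ((1 - a*q^(N+1)*q^k) * (1 - q*q^k)) := by
    ring
  set M : ℂ := qp q ((q^N)⁻¹) k * q^(N*k) / qp q (a*q^(N+1)) k
      * (qp q ((q^k)⁻¹) j * qp q (a*q^j) k * q^j
          / ((1 - a*q^j) * qp q q j * qp q q k)) with hM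
  have hl : ((1 - a * q ^ (2 * k)) * qp q ((q ^ N)⁻¹) k * q ^ (N * k)
        / qp q (a * q ^ (N + 1)) k) *
      (qp q ((q ^ k)⁻¹) j * qp q (a * q ^ j) k * q ^ j
        / ((1 - a * q ^ j) * qp q q j * qp q q k))
      = (1 - a*q^(2*k)) * M := by
    rw [hM]; ring
  have hk : TT q a N j k = M * ((q^k - q^j) * (a*q^(N+k) - 1) / (q^N - q^j)) := by
    unfold TT
    rw [hM]; ring
  have hk1 : TT q a N j (k+1)
      = M * ((a*q^(N+(k+1)) - 1) * (q^N - q^k) * (q^(k+1) - 1) * (1 - a*q^j*q^k)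
          / ((q^N - q^j) * ((1 - a*q^(N+1)*q^k) * (1 - q*q^k)))) := by
    unfold TT
    rw [qp_succ q ((q^N)⁻¹) k, qp_succ q (a*q^(N+1)) k, qp_succ q (a*q^j) k,
      qp_succ q q k, e3, hM]
    have hW : (q:ℂ)^(N*(k+1)) = q^(N*k) * q^N := by
      rw [Nat.mul_succ, pow_add]
    rw [hW]
    have einv1 : (1:ℂ) - (q^(k+1))⁻¹ = (q^(k+1) - 1)/q^(k+1) := by field_simp
    have einv2 : (1:ℂ) - (q^(k+1))⁻¹ * q^j = (q^(k+1) - q^j)/q^(k+1) := by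
      field_simp
    have einv3 : (1:ℂ) - (q^N)⁻¹ * q^k = (q^N - q^k)/q^N := by field_simp
    rw [einv1, einv2, einv3]
    set B1 := qp q ((q^N)⁻¹) k
    set B2 := qp q (a*q^(N+1)) k
    set B3 := qp q ((q^k)⁻¹) j
    set B4 := qp q (a*q^j) k
    set B5 := qp q q k
    set Cj := qp q q j
    field_simp
  rw [hl, hk1, hk]
  set B1 := qp q ((q^N)⁻¹) k
  set B2 := qp q (a*q^(N+1)) k
  set B3 := qp q ((q^k)⁻¹) j
  set B4 := qp q (a*q^j) k
  set B5 := qp q q k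
  set Cj := qp q q j
  have hD : (q^N - q^j) * ((1 - a*q^(N+1)*q^k) * (1 - q*q^k)) ≠ 0 :=
    mul_ne_zero huv (mul_ne_zero h2' h5')
  rw [mul_div_assoc', mul_div_assoc', div_sub_div _ _ hD huv, eq_div_iff (mul_ne_zero hD huv)]
  linear_combination (M * (q^N - q^j)) * key
end

lemma gauss_sq (q : ℂ) : ∀ N : ℕ, (∏ i ∈ Finset.range N, q^i)^2 * q^N = q^(N*N)
  | 0 => by simp
  | (N+1) => by
    rw [Finset.prod_range_succ]
    have ih := gauss_sq q N
    have h : (N+1)*(N+1) = N*N + (2*N+1) := by ring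
    rw [h]
    linear_combination q^(2*N+1) * ih

lemma hA (q : ℂ) (hq0 : q ≠ 0) (N : ℕ) :
    (qp q ((q^N)⁻¹) N * q^(N*N))^2 * q^N = q^(N*N) * (qp q q N)^2 := by
  have hc : (∏ _i ∈ Finset.range N, ((q:ℂ)^N)) = q^(N*N) := by
    rw [Finset.prod_const, Finset.card_range, ← pow_mul]
  have step1 : qp q ((q^N)⁻¹) N * q^(N*N) = ∏ i ∈ Finset.range N, (q^N - q^i) := by
    rw [← hc]
    unfold qp
    rw [← Finset.prod_mul_distrib]
    refine Finset.prod_congr rfl fun i _ => ?_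
    have hqN : (q:ℂ)^N ≠ 0 := pow_ne_zero _ hq0
    field_simp
  have hqpN : qp q q N = ∏ i ∈ Finset.range N, (1 - q^(i+1)) := by
    unfold qp
    exact Finset.prod_congr rfl fun i _ => by rw [← pow_succ']
  have hg : ∀ i ∈ Finset.range N, (q^N - q^i)*(q^N - q^(N-1-i))
      = (q^i*(1-q^(i+1))) * (q^(N-1-i)*(1-q^((N-1-i)+1))) := by
    intro i hi
    simp only [Finset.mem_range] at hi
    obtain ⟨m, hm⟩ : ∃ m, N = i + m + 1 := ⟨N-1-i, by omega⟩
    have hmm : N - 1 - i = m := by omega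
    rw [hmm, hm]
    ring
  have step2 : (∏ i ∈ Finset.range N, (q^N - q^i))^2
      = (∏ i ∈ Finset.range N, q^i)^2 * (qp q q N)^2 := by
    have refl1 : ∏ i ∈ Finset.range N, (q^N - q^(N-1-i))
        = ∏ i ∈ Finset.range N, (q^N - q^i) := Finset.prod_range_reflect (fun i => q^N - q^i) N
    rw [sq]
    nth_rewrite 2 [← refl1]
    rw [← Finset.prod_mul_distrib, Finset.prod_congr rfl hg, Finset.prod_mul_distrib]
    have refl2 : ∏ i ∈ Finset.range N, (q^(N-1-i)*(1-q^((N-1-i)+1)))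
        = ∏ i ∈ Finset.range N, (q^i*(1-q^(i+1))) :=
      Finset.prod_range_reflect (fun i => q^i*(1-q^(i+1))) N
    rw [refl2, Finset.prod_mul_distrib, hqpN]
    ring
  rw [step1, step2]
  linear_combination (qp q q N)^2 * gauss_sq q N

lemma hB (q a : ℂ) (N : ℕ) :
    (1 - a*q^(2*N)) * qp q (a*q^N) N = (1 - a*q^N) * qp q (a*q^(N+1)) N := by
  have l : (1 - a*q^(2*N)) * qp q (a*q^N) N = qp q (a*q^N) (N+1) := by
    rw [qp_succ]
    have : a*q^N*q^N = a*q^(2*N) := by rw [two_mul, pow_add]; ring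
    rw [this]; ring
  have r : qp q (a*q^N) (N+1) = (1 - a*q^N) * qp q (a*q^(N+1)) N := by
    unfold qp
    rw [Finset.prod_range_succ']
    have : ∀ i ∈ Finset.range N, (1 - a*q^N*q^(i+1)) = (1 - a*q^(N+1)*q^i) := by
      intro i _; congr 1; ring
    rw [Finset.prod_congr rfl this, pow_zero, mul_one, mul_comm]
  rw [l, r]

/-- The infinite lower-triangular matrices with entries
`F_{k,m}(a) = (1 - a q^{2m}) (q^{-k}; q)_m q^{k m} / (a q^{k+1}; q)_m` and
`G_{k,m}(a) = (q^{-k}; q)_m (a q^m; q)_k q^m / ((1 - a q^m) (q; q)_m (q; q)_k)`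
are inverse to each other. -/
theorem stmt_0 (q a : ℂ) (hq : ‖q‖ < 1) (hq0 : q ≠ 0)
    (hden1 : ∀ m : ℕ, a * q ^ m ≠ 1)
    (hden2 : ∀ i : ℕ, q ^ (i + 1) ≠ 1) :
    ∀ N j : ℕ, j ≤ N →
      (∑ k ∈ Finset.Icc j N,
        ((1 - a * q ^ (2 * k)) * qp q ((q ^ N)⁻¹) k * q ^ (N * k)
            / qp q (a * q ^ (N + 1)) k) *
        (qp q ((q ^ k)⁻¹) j * qp q (a * q ^ j) k * q ^ j
            / ((1 - a * q ^ j) * qp q q j * qp q q k)))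
      = if j = N then 1 else 0 := by
  intro N j hjN
  rcases eq_or_lt_of_le hjN with rfl | hlt
  · -- diagonal case j = N
    rw [Finset.Icc_self, Finset.sum_singleton, if_pos rfl]
    have h2 : qp q (a*q^(j+1)) j ≠ 0 := qp_aq_ne q a hden1 (j+1) j
    have haj : (1:ℂ) - a*q^j ≠ 0 := one_sub_aq_ne q a hden1 j
    have hCj : qp q q j ≠ 0 := qp_q_ne q hden2 j
    have hA' := hA q hq0 j
    have hB' := hB q a j
    have hden : qp q (a * q ^ (j + 1)) j * ((1 - a * q ^ j) * qp q q j * qp q q j) ≠ 0 :=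
      mul_ne_zero h2 (mul_ne_zero (mul_ne_zero haj hCj) hCj)
    rw [div_mul_div_comm, div_eq_one_iff_eq hden]
    have hqNN : (q:ℂ)^(j*j) ≠ 0 := pow_ne_zero _ hq0
    apply mul_right_cancel₀ hqNN
    linear_combination ((1 - a*q^(2*j)) * qp q (a*q^j) j) * hA'
      + (q^(j*j) * qp q q j * qp q q j) * hB'
  · -- off-diagonal case j < N
    rw [if_neg (Nat.ne_of_lt hlt)]
    have hTj : TT q a N j j = 0 := by
      unfold TT
      simp
    have hTN : TT q a N j (N+1) = 0 := by
      have hz : qp q ((q^N)⁻¹) (N+1) = 0 := by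
        unfold qp
        refine Finset.prod_eq_zero (Finset.self_mem_range_succ N) ?_
        rw [inv_mul_cancel₀ (pow_ne_zero N hq0)]
        ring
      unfold TT
      rw [hz]
      ring
    have tele : ∀ n, j ≤ n → (∑ k ∈ Finset.Icc j n,
        ((1 - a * q ^ (2 * k)) * qp q ((q ^ N)⁻¹) k * q ^ (N * k)
            / qp q (a * q ^ (N + 1)) k) *
        (qp q ((q ^ k)⁻¹) j * qp q (a * q ^ j) k * q ^ j
            / ((1 - a * q ^ j) * qp q q j * qp q q k)))
        = TT q a N j (n+1) := by
      intro n hn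
      induction n, hn using Nat.le_induction with
      | base =>
        rw [Finset.Icc_self, Finset.sum_singleton,
          step q a hq0 hden1 hden2 le_rfl hlt, hTj, sub_zero]
      | succ n hn ih =>
        rw [Finset.sum_Icc_succ_top (Nat.le_succ_of_le hn), ih,
          step q a hq0 hden1 hden2 (Nat.le_succ_of_le hn) hlt]
        ring
    rw [tele N hjN, hTN]
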